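/- add(M) = min{b, cov(M)}, where add(M) is the least cardinality of a family of meager subsets of ω^ω whose union is not meager, b is the least cardinality of a <*-unbounded family in ω^ω, and cov(M) is the least cardinality of a family of meager subsets of ω^ω covering ω^ω. -/

import Mathlib

open Filter Set Cardinal

set_option linter.unusedSectionVars false
set_option maxHeartbeats 1000000



namespace Stmt14

lemma closed_nwd_union {X : Type*} [TopologicalSpace X] {s t : Set X}
    (hs : IsClosed s ∧ IsNowhereDense s) (ht : IsClosed t ∧ IsNowhereDense t) :
    IsClosed (s ∪ t) ∧ IsNowhereDense (s ∪ t) := by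
  rw [isClosed_isNowhereDense_iff_compl] at hs ht ⊢
  rw [Set.compl_union]
  exact ⟨hs.1.inter ht.1, hs.2.inter_of_isOpen_left ht.2 hs.1⟩

lemma closed_nwd_biUnion {X : Type*} [TopologicalSpace X] {ι : Type*} (s : Finset ι)
    {f : ι → Set X} (h : ∀ i ∈ s, IsClosed (f i) ∧ IsNowhereDense (f i)) :
    IsClosed (⋃ i ∈ s, f i) ∧ IsNowhereDense (⋃ i ∈ s, f i) := by
  classical
  induction s using Finset.induction with
  | empty => simpa using ⟨isClosed_empty, isNowhereDense_empty⟩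
  | insert a s' hni ih =>
      rw [Finset.set_biUnion_insert]
      exact closed_nwd_union (h a (Finset.mem_insert_self a s'))
        (ih fun i hi => h i (Finset.mem_insert_of_mem hi))

variable {α : Type*} [TopologicalSpace α] [DiscreteTopology α]

/-- cylinder of a finite stem -/
def cyl (s : List α) : Set (ℕ → α) := {x | ∀ i : Fin s.length, x i = s.get i}

/-- restriction of x to first n coordinates -/
def res (x : ℕ → α) (n : ℕ) : List α := (List.range n).map x

@[simp] lemma res_length (x : ℕ → α) (n : ℕ) : (res x n).length = n := by
  simp [res]

lemma res_get (x : ℕ → α) (n : ℕ) (i : Fin (res x n).length) :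
    (res x n).get i = x i := by
  rw [List.get_eq_getElem]
  simp [res]

lemma res_getElem (x : ℕ → α) (n : ℕ) (i : ℕ) (h : i < (res x n).length) :
    (res x n)[i] = x i := by
  simp [res]

lemma res_prefix (x : ℕ → α) {n m : ℕ} (h : n ≤ m) : res x n <+: res x m := by
  induction m, h using Nat.le_induction with
  | base => exact List.prefix_refl _
  | succ m hm ih =>
      refine ih.trans ?_
      show List.map x (List.range m) <+: List.map x (List.range (m+1))
      rw [List.range_succ, List.map_append]
      exact List.prefix_append _ _

lemma mem_cyl_res (x : ℕ → α) (n : ℕ) : x ∈ cyl (res x n) := by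
  intro i; rw [res_get]

lemma mem_cyl_iff_res {x : ℕ → α} {s : List α} : x ∈ cyl s ↔ res x s.length = s := by
  constructor
  · intro h
    apply List.ext_get (by simp)
    intro i h1 h2
    simp only [List.get_eq_getElem, res_getElem]
    exact h ⟨i, h2⟩
  · intro h
    have := mem_cyl_res x s.length
    rwa [h] at this

lemma cyl_anti {s t : List α} (h : s <+: t) : cyl t ⊆ cyl s := by
  intro x hx i
  obtain ⟨u, rfl⟩ := h
  have hi : (i : ℕ) < (s ++ u).length := by
    simp only [List.length_append]; omega
  have := hx ⟨i, hi⟩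
  simpa [List.get_eq_getElem, List.getElem_append_left i.isLt] using this

lemma isOpen_cyl (s : List α) : IsOpen (cyl s) := by
  have : cyl s = ⋂ i : Fin s.length, (fun x : ℕ → α => x i) ⁻¹' {s.get i} := by
    ext x; simp [cyl, Set.mem_iInter]
  rw [this]
  exact isOpen_iInter_of_finite fun i =>
    (isOpen_discrete _).preimage (continuous_apply _)

lemma isClosed_cyl (s : List α) : IsClosed (cyl s) := by
  have : cyl s = ⋂ i : Fin s.length, (fun x : ℕ → α => x i) ⁻¹' {s.get i} := by
    ext x; simp [cyl, Set.mem_iInter]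
  rw [this]
  exact isClosed_iInter fun i =>
    (isClosed_discrete _).preimage (continuous_apply _)

lemma exists_res_subset {U : Set (ℕ → α)} (hU : IsOpen U) {x : ℕ → α} (hx : x ∈ U) :
    ∃ n, cyl (res x n) ⊆ U := by
  rw [isOpen_pi_iff] at hU
  obtain ⟨I, u, hu, hsub⟩ := hU x hx
  rcases I.eq_empty_or_nonempty with rfl | hne
  · exact ⟨0, fun y _ => hsub (by simp)⟩
  · obtain ⟨m, hm⟩ := I.exists_le
    refine ⟨m + 1, fun y hy => hsub ?_⟩
    intro i hi
    have hilt : (i : ℕ) < m + 1 := Nat.lt_succ_of_le (hm i hi)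
    have := hy ⟨i, by simpa using hilt⟩
    simp only [res_get] at this
    rw [this]
    exact (hu i hi).2

/-- the extension lemma for closed nowhere dense sets -/
lemma exists_ext_disjoint [Nonempty α] {F : Set (ℕ → α)} (hF : IsClosed F)
    (hnd : IsNowhereDense F) (s : List α) :
    ∃ t : List α, s <+: t ∧ s.length < t.length ∧ cyl t ∩ F = ∅ := by
  classical
  inhabit α
  set x₀ : ℕ → α := fun i => if h : i < s.length then s.get ⟨i, h⟩ else default with hx₀
  have hx₀s : x₀ ∈ cyl s := fun i => by simp [hx₀, i.isLt]
  have hint : interior F = ∅ := by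
    rwa [hF.isNowhereDense_iff] at hnd
  have hns : ¬ cyl s ⊆ F := by
    intro hsub
    have : cyl s ⊆ interior F := (isOpen_cyl s).subset_interior_iff.mpr hsub
    rw [hint] at this
    exact this hx₀s
  obtain ⟨y, hys, hyF⟩ : ∃ y, y ∈ cyl s ∧ y ∉ F := by
    by_contra h
    push_neg at h
    exact hns fun y hy => h y hy
  obtain ⟨n, hn⟩ := exists_res_subset (hF.isOpen_compl) hyF
  refine ⟨res y (max n (s.length + 1)), ?_, ?_, ?_⟩
  · have h1 : res y s.length <+: res y (max n (s.length + 1)) :=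
      res_prefix y (le_max_of_le_right (Nat.le_succ _))
    rwa [mem_cyl_iff_res.mp hys] at h1
  · simp
  · apply Set.eq_empty_of_forall_notMem
    rintro z ⟨hz1, hz2⟩
    have : z ∈ cyl (res y n) := cyl_anti (res_prefix y (le_max_left _ _)) hz1
    exact hn this hz2

/-- meager sets are covered by increasing sequences of closed nowhere dense sets -/
lemma meagre_struct {X : Type*} [TopologicalSpace X] {A : Set X} (h : IsMeagre A) :
    ∃ F : ℕ → Set X, (∀ n, IsClosed (F n)) ∧ (∀ n, IsNowhereDense (F n)) ∧
      Monotone F ∧ A ⊆ ⋃ n, F n := by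
  rw [isMeagre_iff_countable_union_isNowhereDense] at h
  obtain ⟨S, hnd, hcnt, hsub⟩ := h
  rcases S.eq_empty_or_nonempty with rfl | hne
  · exact ⟨fun _ => ∅, fun _ => isClosed_empty, fun _ => isNowhereDense_empty,
      monotone_const, by simpa using hsub⟩
  · obtain ⟨f, hf⟩ := hcnt.exists_eq_range hne
    have key : ∀ n : ℕ, IsClosed (⋃ i ∈ Finset.range (n+1), closure (f i)) ∧
        IsNowhereDense (⋃ i ∈ Finset.range (n+1), closure (f i)) := by
      intro n
      apply closed_nwd_biUnion
      intro i _
      exact ⟨isClosed_closure, (hnd (f i) (by rw [hf]; exact mem_range_self i)).closure⟩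
    refine ⟨fun n => ⋃ i ∈ Finset.range (n+1), closure (f i), fun n => (key n).1,
      fun n => (key n).2, ?_, ?_⟩
    · intro n m hnm x hx
      rw [Set.mem_iUnion₂] at hx ⊢
      obtain ⟨i, hi, hxi⟩ := hx
      exact ⟨i, Finset.mem_range.mpr (by have := Finset.mem_range.mp hi; omega), hxi⟩
    · refine hsub.trans ?_
      intro x hx
      obtain ⟨t, htS, hxt⟩ := hx
      rw [hf] at htS
      obtain ⟨i, rfl⟩ := htS
      exact Set.mem_iUnion.mpr ⟨i, Set.mem_biUnion (Finset.self_mem_range_succ i)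
        (subset_closure hxt)⟩

/-- countable unions of nwd covers give meager -/
lemma meagre_of_struct {X : Type*} [TopologicalSpace X] {A : Set X} (F : ℕ → Set X)
    (hnd : ∀ n, IsNowhereDense (F n)) (hsub : A ⊆ ⋃ n, F n) : IsMeagre A := by
  refine IsMeagre.mono hsub ?_
  exact isMeagre_iUnion fun n => by
    rw [isMeagre_iff_countable_union_isNowhereDense]
    exact ⟨{F n}, by simpa using hnd n, Set.countable_singleton _, by simp⟩

end Stmt14


namespace Stmt14

-- foldr max lemmas
lemma le_foldr_max (l : List ℕ) (a : ℕ) : a ≤ l.foldr max a := by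
  induction l with
  | nil => simp
  | cons b l ih => exact le_trans ih (le_max_right _ _)

lemma mem_le_foldr_max {l : List ℕ} {x : ℕ} (h : x ∈ l) (a : ℕ) : x ≤ l.foldr max a := by
  induction l with
  | nil => simp at h
  | cons b l ih =>
      rcases List.mem_cons.mp h with rfl | h
      · exact le_max_left _ _
      · exact le_trans (ih h) (le_max_right _ _)

-- all lists of length L with entries < V
def allLists : ℕ → ℕ → List (List ℕ)
  | 0, _ => [[]]
  | (L+1), V => (List.range V).flatMap (fun v => (allLists L V).map (fun l => v :: l))

lemma mem_allLists {L V : ℕ} : ∀ {s : List ℕ}, s.length = L →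
    (∀ i (h : i < s.length), s[i] < V) → s ∈ allLists L V := by
  induction L with
  | zero =>
      intro s hs _
      rw [List.length_eq_zero_iff] at hs
      simp [hs, allLists]
  | succ L ih =>
      intro s hs hv
      match s with
      | [] => simp at hs
      | a :: s' =>
          simp only [allLists, List.mem_flatMap, List.mem_range, List.mem_map]
          refine ⟨a, hv 0 (by simp), s', ?_, rfl⟩
          apply ih (by simpa using hs)
          intro i h
          have := hv (i+1) (by simpa using Nat.succ_lt_succ h)
          simpa using this

end Stmt14
namespace Stmt14

/-- monotone hull of a function -/
def hull (f : ℕ → ℕ) : ℕ → ℕ := fun m => (Finset.range (m+1)).sup f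

lemma le_hull (f : ℕ → ℕ) (m : ℕ) : f m ≤ hull f m :=
  Finset.le_sup (Finset.self_mem_range_succ m)

lemma hull_mono (f : ℕ → ℕ) : Monotone (hull f) := by
  intro a b hab
  exact Finset.sup_mono (by intro i hi; rw [Finset.mem_range] at *; omega)

/-- the basic meager sets: eventually bounded by u -/
lemma meagre_evBounded (u : ℕ → ℕ) :
    IsMeagre {g : ℕ → ℕ | ∀ᶠ k in atTop, g k ≤ u k} := by
  apply meagre_of_struct (fun N => {g : ℕ → ℕ | ∀ k, N ≤ k → g k ≤ u k})
  · intro N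
    have hcl : IsClosed {g : ℕ → ℕ | ∀ k, N ≤ k → g k ≤ u k} := by
      have : {g : ℕ → ℕ | ∀ k, N ≤ k → g k ≤ u k}
          = ⋂ k, ⋂ (_ : N ≤ k), (fun g : ℕ → ℕ => g k) ⁻¹' {j | j ≤ u k} := by
        ext g; simp [Set.mem_iInter]
      rw [this]
      exact isClosed_iInter fun k => isClosed_iInter fun _ =>
        (isClosed_discrete _).preimage (continuous_apply _)
    rw [hcl.isNowhereDense_iff]
    by_contra hne
    obtain ⟨x, hx⟩ := Set.nonempty_iff_ne_empty.mpr hne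
    obtain ⟨n, hn⟩ := exists_res_subset isOpen_interior hx
    have hsub := hn.trans interior_subset
    set k := max n N with hk
    set y : ℕ → ℕ := Function.update x k (u k + 1) with hy
    have hymem : y ∈ cyl (res x n) := by
      intro i
      have hilt : (i : ℕ) < n := by simpa using i.isLt
      have : y i = x i := by
        apply Function.update_of_ne
        omega
      rw [this, res_get]
    have := hsub hymem k (le_max_right _ _)
    rw [hy, Function.update_self] at this
    omega
  · intro g hg
    obtain ⟨N, hN⟩ := Filter.eventually_atTop.mp hg
    exact Set.mem_iUnion.mpr ⟨N, hN⟩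

/-- the stage recursion data -/
def fstep (ex : List ℕ → ℕ → List ℕ) (m : ℕ) (p : ℕ × ℕ) : ℕ × ℕ :=
  ((((allLists p.1 p.2).map (fun s => ex s m)).map List.length).foldr max (p.1+1),
   ((((allLists p.1 p.2).map (fun s => ex s m)).flatMap id).foldr max p.2) + 1)

def stages (ex : List ℕ → ℕ → List ℕ) : ℕ → ℕ × ℕ :=
  fun m => Nat.rec ((0:ℕ),(1:ℕ)) (fun m p => fstep ex m p) m

@[simp] lemma stages_zero (ex) : stages ex 0 = (0,1) := rfl
lemma stages_succ (ex) (m : ℕ) : stages ex (m+1) = fstep ex m (stages ex m) := rfl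

/-- the diagonal branch construction -/
def bstep (ex : List ℕ → ℕ → List ℕ) (L : ℕ → ℕ) (ms : ℕ → ℕ) (q : List ℕ × ℕ) :
    List ℕ × ℕ :=
  (ex (q.1 ++ List.replicate (L (ms q.2) - q.1.length) 0) (ms q.2)
      ++ List.replicate (L (ms q.2 + 1)
          - (ex (q.1 ++ List.replicate (L (ms q.2) - q.1.length) 0) (ms q.2)).length) 0,
   ms q.2 + 1)

def bseq (ex : List ℕ → ℕ → List ℕ) (L : ℕ → ℕ) (ms : ℕ → ℕ) (p : ℕ) : List ℕ × ℕ :=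
  (bstep ex L ms)^[p] ([], 0)

lemma bseq_succ (ex L ms) (p : ℕ) :
    bseq ex L ms (p+1) = bstep ex L ms (bseq ex L ms p) :=
  Function.iterate_succ_apply' _ _ _

/-- MAIN: an unbounded family yields a non-meager union of meager sets -/
theorem unbounded_nonmeagre {F : Set (ℕ → ℕ)}
    (hF : ∀ g : ℕ → ℕ, ∃ f ∈ F, ¬ ∀ᶠ k in atTop, f k < g k) :
    ¬ IsMeagre (⋃₀ ((fun f => {g : ℕ → ℕ | ∀ᶠ k in atTop, g k ≤ hull f k}) '' F)) := by
  intro hmeag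
  obtain ⟨G, hGc, hGnd, hGmono, hGsub⟩ := meagre_struct hmeag
  choose ex hpre hlen hdisj using fun (s : List ℕ) (n : ℕ) =>
    exists_ext_disjoint (hGc n) (hGnd n) s
  set L : ℕ → ℕ := fun m => (stages ex m).1 with hLdef
  set V : ℕ → ℕ := fun m => (stages ex m).2 with hVdef
  have hL0 : L 0 = 0 := rfl
  have hV0 : V 0 = 1 := rfl
  have hLsucc : ∀ m, L m + 1 ≤ L (m+1) := by
    intro m
    have h1 : L (m+1) = (((allLists (L m) (V m)).map
        (fun s => ex s m)).map List.length).foldr max (L m + 1) := rfl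
    rw [h1]
    exact le_foldr_max _ _
  have hVsucc : ∀ m, V m + 1 ≤ V (m+1) := by
    intro m
    have h1 : V (m+1) = ((((allLists (L m) (V m)).map
        (fun s => ex s m)).flatMap id).foldr max (V m)) + 1 := rfl
    rw [h1]
    have := le_foldr_max ((((allLists (L m) (V m)).map (fun s => ex s m)).flatMap id)) (V m)
    omega
  have hLmono : Monotone L := monotone_nat_of_le_succ fun m => by have := hLsucc m; omega
  have hVmono : Monotone V := monotone_nat_of_le_succ fun m => by have := hVsucc m; omega
  have hLge : ∀ m, m ≤ L m := by
    intro m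
    induction m with
    | zero => omega
    | succ m ih => have := hLsucc m; omega
  have hVpos : ∀ m, 1 ≤ V m := by
    intro m
    induction m with
    | zero => omega
    | succ m ih => have := hVsucc m; omega
  -- stage extension property
  have hstage : ∀ m (s : List ℕ), s.length = L m → (∀ i (h : i < s.length), s[i] < V m) →
      (ex s m).length ≤ L (m+1) ∧ (∀ i (h : i < (ex s m).length), (ex s m)[i] < V (m+1)) := by
    intro m s hslen hsval
    have hmem : s ∈ allLists (L m) (V m) := mem_allLists hslen hsval
    have hmem' : ex s m ∈ (allLists (L m) (V m)).map
        (fun s => ex s m) := List.mem_map.mpr ⟨s, hmem, rfl⟩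
    constructor
    · have h1 : L (m+1) = ((((allLists (L m) (V m)).map
          (fun s => ex s m)).map List.length).foldr max (L m + 1)) := rfl
      rw [h1]
      exact mem_le_foldr_max (List.mem_map.mpr ⟨ex s m, hmem', rfl⟩) _
    · intro i h
      have h2 : V (m+1) = ((((allLists (L m) (V m)).map
          (fun s => ex s m)).flatMap id).foldr max (V m)) + 1 := rfl
      have hm3 : (ex s m)[i] ∈ ((allLists (L m) (V m)).map
          (fun s => ex s m)).flatMap id :=
        List.mem_flatMap.mpr ⟨ex s m, hmem', List.getElem_mem h⟩
      have := mem_le_foldr_max hm3 (V m)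
      omega
  -- get the unbounded witness
  obtain ⟨f, hfF, hcon⟩ := hF (fun k => V (k+2))
  set u : ℕ → ℕ := hull f with hu
  rw [Filter.not_eventually] at hcon
  have hfreq : ∀ m₀, ∃ k ≥ m₀, V (k+2) ≤ u k := by
    intro m₀
    obtain ⟨k, hk1, hk2⟩ := (Filter.frequently_atTop.mp hcon) m₀
    exact ⟨k, hk1, le_trans (by omega) (le_hull f k)⟩
  -- the stage finder
  have hstagefind : ∀ k, ∃ m, L m ≤ k ∧ k < L (m+1) := by
    intro k
    have hub : ∃ m, k < L (m+1) := ⟨k, by have := hLge (k+1); omega⟩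
    refine ⟨Nat.find hub, ?_, Nat.find_spec hub⟩
    rcases Nat.eq_zero_or_pos (Nat.find hub) with h0 | hpos
    · rw [h0, hL0]; omega
    · obtain ⟨m', hm'⟩ : ∃ m', Nat.find hub = m' + 1 := ⟨Nat.find hub - 1, by omega⟩
      have := Nat.find_min hub (m := m') (by omega)
      rw [hm']
      omega
  -- S' : arbitrarily late good stages
  have hS : ∀ m₀, ∃ m' > m₀, V (m'+1) ≤ u (L m') := by
    intro m₀
    obtain ⟨k, hk1, hk2⟩ := hfreq (L (m₀+1))
    obtain ⟨m, hm1, hm2⟩ := hstagefind k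
    have hmge : m₀ + 1 ≤ m := by
      by_contra hlt
      have : L (m+1) ≤ L (m₀+1) := hLmono (by omega)
      omega
    refine ⟨m+1, by omega, ?_⟩
    show V (m+2) ≤ u (L (m+1))
    have h1 : V (m+2) ≤ V (k+2) := hVmono (by have := hLge m; omega)
    have h2 : u k ≤ u (L (m+1)) := hull_mono f (by omega)
    omega
  choose ms hms1 hms2 using hS
  -- the branch
  set σ : ℕ → List ℕ × ℕ := bseq ex L ms with hσdef
  -- the invariant
  have hInv : ∀ p, (σ p).1.length = L ((σ p).2) ∧
      (∀ i (h : i < (σ p).1.length), (σ p).1[i] < V ((σ p).2)) ∧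
      (∀ i (h : i < (σ p).1.length), (σ p).1[i] ≤ u i) ∧ p ≤ (σ p).2 := by
    intro p
    induction p with
    | zero =>
        refine ⟨by simpa [hσdef, bseq] using hL0.symm, ?_, ?_, le_refl _⟩
        · intro i h; simp [hσdef, bseq] at h
        · intro i h; simp [hσdef, bseq] at h
    | succ p ih =>
        obtain ⟨ih1, ih2, ih3, ih4⟩ := ih
        have hstep : σ (p+1) = bstep ex L ms (σ p) := bseq_succ ex L ms p
        set s : List ℕ := (σ p).1 with hs
        set m : ℕ := (σ p).2 with hm
        set m' : ℕ := ms m with hm'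
        have hmm' : m < m' := hms1 m
        set s' : List ℕ := s ++ List.replicate (L m' - s.length) 0 with hs'
        set w : List ℕ := ex s' m' with hw
        have hσeq : σ (p+1) = (w ++ List.replicate (L (m'+1) - w.length) 0, m'+1) := hstep
        have hs'len : s'.length = L m' := by
          rw [hs', List.length_append, List.length_replicate, ih1]
          have : L m ≤ L m' := hLmono (le_of_lt hmm')
          omega
        have hs'val : ∀ i (h : i < s'.length), s'[i] < V m' := by
          intro i h
          simp only [hs'] at h ⊢
          rcases Nat.lt_or_ge i s.length with hlt | hge
          · rw [List.getElem_append_left hlt]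
            exact lt_of_lt_of_le (ih2 i hlt) (hVmono (le_of_lt hmm'))
          · rw [List.getElem_append_right hge, List.getElem_replicate]
            exact hVpos m'
        have hs'le : ∀ i (h : i < s'.length), s'[i] ≤ u i := by
          intro i h
          simp only [hs'] at h ⊢
          rcases Nat.lt_or_ge i s.length with hlt | hge
          · rw [List.getElem_append_left hlt]; exact ih3 i hlt
          · rw [List.getElem_append_right hge, List.getElem_replicate]
            omega
        obtain ⟨hwlen, hwval⟩ := hstage m' s' hs'len hs'val
        simp only [← hw] at hwlen hwval
        have hwpre : s' <+: w := hpre s' m'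
        refine ⟨?_, ?_, ?_, ?_⟩
        · rw [hσeq]
          show (w ++ List.replicate (L (m'+1) - w.length) 0).length = L (m'+1)
          simp only [List.length_append, List.length_replicate]
          omega
        · intro i h
          simp only [hσeq] at h ⊢
          rcases Nat.lt_or_ge i w.length with hlt | hge
          · rw [List.getElem_append_left hlt]
            exact hwval i hlt
          · rw [List.getElem_append_right hge, List.getElem_replicate]
            exact hVpos _
        · intro i h
          simp only [hσeq] at h ⊢
          rcases Nat.lt_or_ge i w.length with hlt | hge
          · rw [List.getElem_append_left hlt]
            rcases Nat.lt_or_ge i s'.length with hlt2 | hge2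
            · rw [← hwpre.getElem hlt2]
              exact hs'le i hlt2
            · -- i ≥ L m' : use hms2
              have h1 : w[i] < V (m'+1) := hwval i hlt
              have h2 : V (m'+1) ≤ u (L m') := hms2 m
              have h3 : u (L m') ≤ u i := hull_mono f (by rw [hs'len] at hge2; omega)
              omega
          · rw [List.getElem_append_right hge, List.getElem_replicate]
            omega
        · rw [hσeq]
          simp only
          omega
  -- prefix chain
  have hchain : ∀ p, (σ p).1 <+: (σ (p+1)).1 := by
    intro p
    have hstep : σ (p+1) = bstep ex L ms (σ p) := bseq_succ ex L ms p
    rw [hstep, bstep]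
    simp only
    refine (List.prefix_append _ _).trans ((hpre _ _).trans (List.prefix_append _ _))
  have hchain' : ∀ p q, p ≤ q → (σ p).1 <+: (σ q).1 := by
    intro p q hpq
    induction q, hpq using Nat.le_induction with
    | base => exact List.prefix_refl _
    | succ q hq ih => exact ih.trans (hchain q)
  -- each step kills G
  have hkill : ∀ p, ∃ m', p ≤ m' ∧ cyl ((σ (p+1)).1) ∩ G m' = ∅ := by
    intro p
    have hstep : σ (p+1) = bstep ex L ms (σ p) := bseq_succ ex L ms p
    refine ⟨ms ((σ p).2), ?_, ?_⟩
    · have := hms1 ((σ p).2)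
      have := (hInv p).2.2.2
      omega
    · have hsub : cyl ((σ (p+1)).1) ⊆ cyl (ex ((σ p).1 ++
          List.replicate (L (ms ((σ p).2)) - (σ p).1.length) 0) (ms ((σ p).2))) := by
        apply cyl_anti
        rw [hstep, bstep]
        exact List.prefix_append _ _
      have hd := hdisj ((σ p).1 ++
          List.replicate (L (ms ((σ p).2)) - (σ p).1.length) 0) (ms ((σ p).2))
      apply Set.eq_empty_of_forall_notMem
      rintro z ⟨hz1, hz2⟩
      exact Set.eq_empty_iff_forall_notMem.mp hd z ⟨hsub hz1, hz2⟩
  -- lengths grow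
  have hlen' : ∀ p, p ≤ (σ p).1.length := by
    intro p
    have h1 := (hInv p).1
    have h2 := (hInv p).2.2.2
    have := hLge ((σ p).2)
    omega
  -- the diagonal function
  set g : ℕ → ℕ := fun i => ((σ (i+1)).1).getD i 0 with hg
  have hgval : ∀ p (i : ℕ) (h : i < (σ p).1.length), g i = (σ p).1[i] := by
    intro p i h
    have hi1 : i < (σ (i+1)).1.length := lt_of_lt_of_le (Nat.lt_succ_self i) (hlen' (i+1))
    have hgi : g i = (σ (i+1)).1[i] := by
      rw [hg]
      simp only
      exact List.getD_eq_getElem _ _ hi1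
    rcases Nat.le_total (i+1) p with hle | hle
    · rw [hgi, (hchain' (i+1) p hle).getElem hi1]
    · rw [hgi, (hchain' p (i+1) hle).getElem h]
  have hgcyl : ∀ p, g ∈ cyl ((σ p).1) := by
    intro p i
    rw [List.get_eq_getElem]
    exact hgval p i i.isLt
  -- g is in the union
  have hgmem : g ∈ ⋃₀ ((fun f => {g : ℕ → ℕ | ∀ᶠ k in atTop, g k ≤ hull f k}) '' F) := by
    refine ⟨_, ⟨f, hfF, rfl⟩, ?_⟩
    refine Filter.Eventually.of_forall ?_
    intro k
    have hk : k < (σ (k+1)).1.length := lt_of_lt_of_le (Nat.lt_succ_self k) (hlen' (k+1))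
    have := (hInv (k+1)).2.2.1 k hk
    rw [hgval (k+1) k hk]
    exact this
  -- but g avoids all G n
  have hgavoid : ∀ n, g ∉ G n := by
    intro n hgn
    obtain ⟨m', hm'1, hm'2⟩ := hkill n
    have : g ∈ G m' := hGmono hm'1 hgn
    exact Set.eq_empty_iff_forall_notMem.mp hm'2 g ⟨hgcyl (n+1), this⟩
  obtain ⟨_, ⟨n, rfl⟩, hgn⟩ := hGsub hgmem
  exact hgavoid n hgn

end Stmt14
namespace Stmt14

/-- the canonical map from Baire space to Cantor space -/
def phi (g : ℕ → ℕ) (i : ℕ) : Bool :=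
  if h1 : i < g 0 then false
  else if h2 : i = g 0 then true
  else phi (fun n => g (n+1)) (i - g 0 - 1)
termination_by i
decreasing_by omega

lemma phi_lt {g : ℕ → ℕ} {i : ℕ} (h : i < g 0) : phi g i = false := by
  rw [phi, dif_pos h]

lemma phi_eq {g : ℕ → ℕ} {i : ℕ} (h : i = g 0) : phi g i = true := by
  rw [phi, dif_neg (by omega), dif_pos h]

lemma phi_gt {g : ℕ → ℕ} {i : ℕ} (h : g 0 < i) :
    phi g i = phi (fun n => g (n+1)) (i - g 0 - 1) := by
  rw [phi, dif_neg (by omega), dif_neg (by omega)]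

/-- phi g i only depends on g up to i -/
lemma phi_local : ∀ i : ℕ, ∀ g g' : ℕ → ℕ, (∀ j, j ≤ i → g j = g' j) →
    phi g i = phi g' i := by
  intro i
  induction i using Nat.strong_induction_on with
  | _ i ih =>
      intro g g' hagree
      have h0 : g 0 = g' 0 := hagree 0 (Nat.zero_le i)
      rcases Nat.lt_trichotomy i (g 0) with hlt | heq | hgt
      · rw [phi_lt hlt, phi_lt (h0 ▸ hlt)]
      · rw [phi_eq heq, phi_eq (by omega)]
      · rw [phi_gt hgt, phi_gt (show g' 0 < i by omega), h0]
        apply ih _ (show i - g' 0 - 1 < i by omega)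
        intro j hj
        exact hagree (j+1) (by omega)

lemma continuous_phi : Continuous phi := by
  apply continuous_pi
  intro i
  rw [continuous_def]
  intro U _
  rw [isOpen_iff_mem_nhds]
  intro x hx
  rw [mem_nhds_iff]
  refine ⟨cyl (res x (i+1)), ?_, isOpen_cyl _, mem_cyl_res x (i+1)⟩
  intro y hy
  have : phi y i = phi x i := by
    apply phi_local
    intro j hj
    have hj' : j < (res x (i+1)).length := by simpa using Nat.lt_succ_of_le hj
    have := hy ⟨j, hj'⟩
    rw [this, res_get]
  simpa [Set.mem_preimage, this] using hx

/-- word coding of a stem -/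
def word : List ℕ → List Bool
  | [] => []
  | a :: t => List.replicate a false ++ true :: word t

lemma word_append (s t : List ℕ) : word (s ++ t) = word s ++ word t := by
  induction s with
  | nil => simp [word]
  | cons a s ih => simp [word, ih]

lemma word_prefix {s t : List ℕ} (h : s <+: t) : word s <+: word t := by
  obtain ⟨r, rfl⟩ := h
  rw [word_append]
  exact List.prefix_append _ _

lemma word_length_cons (a : ℕ) (t : List ℕ) :
    (word (a :: t)).length = a + 1 + (word t).length := by
  simp [word]; omega

/-- getElem facts for word (a :: t) -/
lemma word_cons_getElem_lt {a : ℕ} {t : List ℕ} {i : ℕ} (h : i < a)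
    (hl : i < (word (a :: t)).length) : (word (a :: t))[i] = false := by
  simp only [word]
  rw [List.getElem_append_left (by simpa using h), List.getElem_replicate]

lemma word_cons_getElem_eq {a : ℕ} {t : List ℕ}
    (hl : a < (word (a :: t)).length) : (word (a :: t))[a] = true := by
  simp only [word]
  rw [List.getElem_append_right (by simp)]
  simp

lemma word_cons_getElem_gt {a : ℕ} {t : List ℕ} {i : ℕ} (h : i < (word t).length)
    (hl : a + 1 + i < (word (a :: t)).length) :
    (word (a :: t))[a + 1 + i] = (word t)[i] := by
  simp only [word]
  rw [List.getElem_append_right (by simp; omega)]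
  have : a + 1 + i - (List.replicate a false).length = i + 1 := by simp; omega
  simp only [this]
  simp

/-- the key correspondence: phi g extends word t iff g extends t -/
lemma ext_iff : ∀ (t : List ℕ) (g : ℕ → ℕ),
    (∀ i (h : i < (word t).length), phi g i = (word t)[i]) ↔
    (∀ j (h : j < t.length), g j = t[j]) := by
  intro t
  induction t with
  | nil =>
      intro g
      constructor
      · intro _ j h; simp [word] at h
      · intro _ i h; simp [word] at h
  | cons a t ih =>
      intro g
      have hlen : (word (a :: t)).length = a + 1 + (word t).length := word_length_cons a t
      constructor
      · intro h1
        have hg0 : g 0 = a := by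
          rcases Nat.lt_trichotomy (g 0) a with hlt | heq | hgt
          · exfalso
            have hl : g 0 < (word (a :: t)).length := by omega
            have := h1 (g 0) hl
            rw [phi_eq rfl, word_cons_getElem_lt hlt hl] at this
            simp at this
          · exact heq
          · exfalso
            have hl : a < (word (a :: t)).length := by omega
            have := h1 a hl
            rw [phi_lt hgt, word_cons_getElem_eq hl] at this
            simp at this
        have htail : ∀ j (h : j < t.length), (fun n => g (n+1)) j = t[j] := by
          apply (ih (fun n => g (n+1))).mp
          intro i h
          have hl : a + 1 + i < (word (a :: t)).length := by omega
          have h2 := h1 (a+1+i) hl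
          rw [word_cons_getElem_gt h hl] at h2
          rw [← h2, phi_gt (show g 0 < a+1+i by omega), hg0]
          simp only [show a + 1 + i - a - 1 = i from by omega]
        intro j hj
        match j with
        | 0 => exact hg0
        | (j'+1) =>
            have : j' < t.length := by simpa using hj
            simpa using htail j' this
      · intro h2 i hi
        have hg0 : g 0 = a := by
          have := h2 0 (by simp)
          simpa using this
        rcases Nat.lt_trichotomy i a with hlt | heq | hgt
        · rw [phi_lt (by omega), word_cons_getElem_lt hlt hi]
        · subst heq
          rw [phi_eq hg0.symm, word_cons_getElem_eq hi]
        · have hi' : i - a - 1 < (word t).length := by omega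
          have htail : ∀ i' (h : i' < (word t).length),
              phi (fun n => g (n+1)) i' = (word t)[i'] := by
            apply (ih (fun n => g (n+1))).mpr
            intro j hj
            have hj2 : j + 1 < (a :: t).length := by simpa using Nat.succ_lt_succ hj
            simpa using h2 (j+1) hj2
          have hl2 : a + 1 + (i - a - 1) < (word (a :: t)).length := by omega
          have h3 : (word (a :: t))[a + 1 + (i - a - 1)] = (word t)[i - a - 1] :=
            word_cons_getElem_gt hi' hl2
          simp only [show a + 1 + (i - a - 1) = i from by omega] at h3
          have h4 : phi g i = phi (fun n => g (n+1)) (i - a - 1) := by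
            rw [phi_gt (show g 0 < i by omega), hg0]
          rw [h4, htail _ hi', ← h3]

end Stmt14
namespace Stmt14

/-- every binary word parses as a word plus trailing zeros -/
lemma parse (u : List Bool) : ∃ t b, u = word t ++ List.replicate b false := by
  induction u with
  | nil => exact ⟨[], 0, rfl⟩
  | cons hd tl ih =>
      obtain ⟨t, b, rfl⟩ := ih
      cases hd with
      | true => exact ⟨0 :: t, b, by simp [word]⟩
      | false =>
          cases t with
          | nil => exact ⟨[], b+1, by simp [word, List.replicate_succ]⟩
          | cons a t₂ =>
              exact ⟨(a+1) :: t₂, b, by simp [word, List.replicate_succ]⟩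

/-- the 0-extension of a stem -/
def pad {α : Type*} (d : α) (t : List α) : ℕ → α := fun i => t.getD i d

lemma pad_mem_cyl {α : Type*} [TopologicalSpace α] [DiscreteTopology α] (d : α) (t : List α) :
    pad d t ∈ cyl t := by
  intro i
  rw [List.get_eq_getElem]
  exact List.getD_eq_getElem t d i.isLt

/-- membership in a Bool cylinder as agreement -/
lemma mem_cyl_iff {α : Type*} [TopologicalSpace α] [DiscreteTopology α]
    {x : ℕ → α} {s : List α} :
    x ∈ cyl s ↔ ∀ i (h : i < s.length), x i = s[i] := by
  constructor
  · intro hx i h; have := hx ⟨i, h⟩; simpa using this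
  · intro h i; rw [List.get_eq_getElem]; exact h i i.isLt

/-- phi maps cylinders into word-cylinders, and conversely -/
lemma phi_mem_word_cyl {g : ℕ → ℕ} {t : List ℕ} (h : g ∈ cyl t) :
    phi g ∈ cyl (word t) :=
  mem_cyl_iff.mpr ((ext_iff t g).mpr (mem_cyl_iff.mp h))

lemma mem_cyl_of_phi {g : ℕ → ℕ} {t : List ℕ} (h : phi g ∈ cyl (word t)) :
    g ∈ cyl t :=
  mem_cyl_iff.mpr ((ext_iff t g).mp (mem_cyl_iff.mp h))

/-- extension lemma transferred to Baire space -/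
lemma preimage_ext {F : Set (ℕ → Bool)} (hc : IsClosed F) (hnd : IsNowhereDense F)
    (t : List ℕ) : ∃ t' : List ℕ, t <+: t' ∧ cyl t' ∩ phi ⁻¹' F = ∅ := by
  obtain ⟨u, hu1, _, hu3⟩ := exists_ext_disjoint hc hnd (word t)
  obtain ⟨v, rfl⟩ := hu1
  obtain ⟨r, b, rfl⟩ := parse v
  refine ⟨t ++ r ++ [b], ⟨r ++ [b], by simp⟩, ?_⟩
  apply Set.eq_empty_of_forall_notMem
  rintro g ⟨hg1, hg2⟩
  have hword : phi g ∈ cyl (word (t ++ r ++ [b])) := phi_mem_word_cyl hg1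
  have hpre : (word t ++ (word r ++ List.replicate b false)) <+: word (t ++ r ++ [b]) := by
    rw [word_append, word_append]
    have hwb : word [b] = List.replicate b false ++ [true] := by simp [word]
    rw [hwb]
    refine ⟨[true], ?_⟩
    simp [List.append_assoc]
  have : phi g ∈ cyl (word t ++ (word r ++ List.replicate b false)) :=
    cyl_anti hpre hword
  exact Set.eq_empty_iff_forall_notMem.mp hu3 (phi g) ⟨this, hg2⟩

end Stmt14
namespace Stmt14

lemma nwd_of_cyl_ext {α : Type*} [TopologicalSpace α] [DiscreteTopology α] (d : α)
    {F : Set (ℕ → α)}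
    (h : ∀ t : List α, ∃ t', t <+: t' ∧ cyl t' ∩ F = ∅) : IsNowhereDense F := by
  rw [IsNowhereDense]
  apply Set.eq_empty_of_forall_notMem
  intro x hx
  obtain ⟨j, hj⟩ := exists_res_subset isOpen_interior hx
  have hsub : cyl (res x j) ⊆ closure F := hj.trans interior_subset
  obtain ⟨t', hpre, hdisj⟩ := h (res x j)
  have hFc : F ⊆ (cyl t')ᶜ := by
    intro z hz hz2
    exact Set.eq_empty_iff_forall_notMem.mp hdisj z ⟨hz2, hz⟩
  have hclos : closure F ⊆ (cyl t')ᶜ :=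
    closure_minimal hFc (isClosed_compl_iff.mpr (isOpen_cyl t'))
  have hmem : pad d t' ∈ cyl t' := pad_mem_cyl d t'
  exact hclos (hsub (cyl_anti hpre hmem)) hmem

/-- T1 : preimages of meager sets under phi are meager -/
lemma meagre_preimage_phi {B : Set (ℕ → Bool)} (h : IsMeagre B) :
    IsMeagre (phi ⁻¹' B) := by
  obtain ⟨F, hc, hnd, _, hsub⟩ := meagre_struct h
  apply meagre_of_struct (fun n => phi ⁻¹' F n)
  · intro n
    apply nwd_of_cyl_ext 0
    exact preimage_ext (hc n) (hnd n)
  · intro g hg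
    obtain ⟨_, ⟨n, rfl⟩, hn⟩ := hsub hg
    exact Set.mem_iUnion.mpr ⟨n, hn⟩

lemma image_ext {G : Set (ℕ → ℕ)} (hc : IsClosed G) (hnd : IsNowhereDense G)
    (u : List Bool) : ∃ u', u <+: u' ∧ cyl u' ∩ phi '' G = ∅ := by
  obtain ⟨t, b, rfl⟩ := parse u
  obtain ⟨t₂, hpre, _, hdisj⟩ := exists_ext_disjoint hc hnd (t ++ [b])
  refine ⟨word t₂, ?_, ?_⟩
  · have h1 : word t ++ List.replicate b false <+: word (t ++ [b]) := by
      rw [word_append]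
      have hwb : word [b] = List.replicate b false ++ [true] := by simp [word]
      rw [hwb]
      exact ⟨[true], by simp [List.append_assoc]⟩
    exact h1.trans (word_prefix hpre)
  · apply Set.eq_empty_of_forall_notMem
    rintro x ⟨hx1, g, hg, rfl⟩
    have : g ∈ cyl t₂ := mem_cyl_of_phi hx1
    exact Set.eq_empty_iff_forall_notMem.mp hdisj g ⟨this, hg⟩

/-- T2 : meager sets in Baire space push forward into meager sets of Cantor space -/
lemma exists_meagre_image {A : Set (ℕ → ℕ)} (h : IsMeagre A) :
    ∃ B : Set (ℕ → Bool), IsMeagre B ∧ ∀ g ∈ A, phi g ∈ B := by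
  obtain ⟨G, hc, hnd, _, hsub⟩ := meagre_struct h
  refine ⟨⋃ n, phi '' G n, ?_, ?_⟩
  · apply meagre_of_struct (fun n => phi '' G n)
    · intro n
      apply nwd_of_cyl_ext false
      exact image_ext (hc n) (hnd n)
    · exact subset_rfl
  · intro g hg
    obtain ⟨_, ⟨n, rfl⟩, hn⟩ := hsub hg
    exact Set.mem_iUnion.mpr ⟨n, Set.mem_image_of_mem phi hn⟩

end Stmt14
namespace Stmt14

/-- matching on an interval -/
def MatchOn (x y : ℕ → Bool) (a b : ℕ) : Prop := ∀ i, a ≤ i → i < b → x i = y i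

/-- canonical meager sets in Cantor space -/
def MSet (n : ℕ → ℕ) (y : ℕ → Bool) : Set (ℕ → Bool) :=
  {x | ∀ᶠ k in atTop, ¬ MatchOn x y (n k) (n (k+1))}

lemma isOpen_matchOn (y : ℕ → Bool) (a b : ℕ) : IsOpen {z : ℕ → Bool | MatchOn z y a b} := by
  have : {z : ℕ → Bool | MatchOn z y a b}
      = ⋂ i : Fin b, {z : ℕ → Bool | a ≤ (i:ℕ) → z i = y i} := by
    ext z
    simp only [Set.mem_setOf_eq, Set.mem_iInter, MatchOn]
    constructor
    · intro h i hai; exact h i hai i.isLt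
    · intro h i hai hib; exact h ⟨i, hib⟩ hai
  rw [this]
  apply isOpen_iInter_of_finite
  intro i
  by_cases h : a ≤ (i : ℕ)
  · have : {z : ℕ → Bool | a ≤ (i:ℕ) → z i = y i}
        = (fun z : ℕ → Bool => z i) ⁻¹' {y i} := by
      ext z; simp [h]
    rw [this]
    exact (isOpen_discrete _).preimage (continuous_apply _)
  · have : {z : ℕ → Bool | a ≤ (i:ℕ) → z i = y i} = Set.univ := by
      ext z; simp [h]
    rw [this]
    exact isOpen_univ

/-- general criterion: the set of points eventually avoiding a sequence of open sets,
each of which is "reachable" from any stem arbitrarily late, is meager -/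
lemma meagre_of_blocks {P : ℕ → Set (ℕ → Bool)} (hopen : ∀ k, IsOpen (P k))
    (hden : ∀ N j, ∃ k, N ≤ k ∧ ∀ x : ℕ → Bool, ∃ z ∈ P k, ∀ i, i < j → z i = x i) :
    IsMeagre {x : ℕ → Bool | ∀ᶠ k in atTop, x ∉ P k} := by
  apply meagre_of_struct (fun N => {x : ℕ → Bool | ∀ k, N ≤ k → x ∉ P k})
  · intro N
    have hcl : IsClosed {x : ℕ → Bool | ∀ k, N ≤ k → x ∉ P k} := by
      rw [← isOpen_compl_iff]
      have : {x : ℕ → Bool | ∀ k, N ≤ k → x ∉ P k}ᶜ = ⋃ k, ⋃ (_ : N ≤ k), P k := by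
        ext x; simp [Set.mem_iUnion]
      rw [this]
      exact isOpen_iUnion fun k => isOpen_iUnion fun _ => hopen k
    rw [hcl.isNowhereDense_iff]
    apply Set.eq_empty_of_forall_notMem
    intro x hx
    obtain ⟨j, hj⟩ := exists_res_subset isOpen_interior hx
    have hsub := hj.trans interior_subset
    obtain ⟨k, hkN, hk⟩ := hden N j
    obtain ⟨z, hzP, hz⟩ := hk x
    have hzc : z ∈ cyl (res x j) := by
      apply mem_cyl_iff.mpr
      intro i h
      rw [res_getElem]
      exact hz i (by simpa using h)
    exact (hsub hzc) k hkN hzP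
  · intro x hx
    obtain ⟨N, hN⟩ := Filter.eventually_atTop.mp hx
    exact Set.mem_iUnion.mpr ⟨N, hN⟩

/-- overwrite x by y on [a,b) -/
def ow (x y : ℕ → Bool) (a b : ℕ) : ℕ → Bool := fun i => if a ≤ i ∧ i < b then y i else x i

lemma meagre_MSet {n : ℕ → ℕ} (hsm : StrictMono n) (y : ℕ → Bool) :
    IsMeagre (MSet n y) := by
  have : MSet n y = {x : ℕ → Bool | ∀ᶠ k in atTop,
      x ∉ {z : ℕ → Bool | MatchOn z y (n k) (n (k+1))}} := rfl
  rw [this]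
  apply meagre_of_blocks (fun k => isOpen_matchOn y (n k) (n (k+1)))
  intro N j
  refine ⟨max N j, le_max_left _ _, ?_⟩
  intro x
  refine ⟨ow x y (n (max N j)) (n (max N j + 1)), ?_, ?_⟩
  · intro i h1 h2
    simp [ow, h1, h2]
  · intro i hij
    have hlt : i < n (max N j) := lt_of_lt_of_le (lt_of_lt_of_le hij (le_max_right N j))
      (hsm.le_apply)
    simp [ow, Nat.not_le.mpr hlt]

-- all Bool lists of a given length
def allBool : ℕ → List (List Bool)
  | 0 => [[]]
  | (m+1) => (allBool m).flatMap (fun l => [true :: l, false :: l])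

lemma mem_allBool : ∀ {m : ℕ} {s : List Bool}, s.length = m → s ∈ allBool m := by
  intro m
  induction m with
  | zero =>
      intro s hs
      rw [List.length_eq_zero_iff] at hs
      simp [hs, allBool]
  | succ m ih =>
      intro s hs
      match s with
      | [] => simp at hs
      | a :: s' =>
          simp only [allBool, List.mem_flatMap]
          refine ⟨s', ih (by simpa using hs), ?_⟩
          cases a <;> simp

/-- the block lemma : one word killing F over all stems of a given length -/
lemma exists_block {F : Set (ℕ → Bool)} (hc : IsClosed F) (hnd : IsNowhereDense F)
    (m : ℕ) : ∃ w : List Bool, w ≠ [] ∧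
      ∀ s : List Bool, s.length = m → cyl (s ++ w) ∩ F = ∅ := by
  have aux : ∀ (Lst : List (List Bool)) (w0 : List Bool),
      ∃ w, w0 <+: w ∧ ∀ s ∈ Lst, cyl (s ++ w) ∩ F = ∅ := by
    intro Lst
    induction Lst with
    | nil => exact fun w0 => ⟨w0, List.prefix_refl _, by simp⟩
    | cons s rest ih =>
        intro w0
        obtain ⟨w, hw0, hw⟩ := ih w0
        obtain ⟨t, hpre, _, hdisj⟩ := exists_ext_disjoint hc hnd (s ++ w)
        obtain ⟨w', rfl⟩ := hpre
        refine ⟨w ++ w', hw0.trans (List.prefix_append _ _), ?_⟩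
        intro s'' hs''
        rcases List.mem_cons.mp hs'' with rfl | hmem
        · rw [← List.append_assoc]
          exact hdisj
        · apply Set.eq_empty_of_forall_notMem
          rintro z ⟨hz1, hz2⟩
          have : z ∈ cyl (s'' ++ w) := by
            apply cyl_anti ?_ hz1
            exact ⟨w', by rw [List.append_assoc]⟩
          exact Set.eq_empty_iff_forall_notMem.mp (hw s'' hmem) z ⟨this, hz2⟩
  obtain ⟨w, hw0, hw⟩ := aux (allBool m) [true]
  refine ⟨w, ?_, ?_⟩
  · intro h
    rw [h] at hw0
    simpa using hw0.length_le
  · intro s hs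
    exact hw s (mem_allBool hs)

/-- prefix recursion for the characterization -/
def bpr (W : ℕ → ℕ → List Bool) : ℕ → List Bool :=
  fun k => Nat.rec [] (fun k p => p ++ W p.length k) k

lemma bpr_succ (W) (k : ℕ) : bpr W (k+1) = bpr W k ++ W (bpr W k).length k := rfl

/-- every meager subset of Cantor space is inside a canonical one -/
lemma exists_canonical {A : Set (ℕ → Bool)} (h : IsMeagre A) :
    ∃ (n : ℕ → ℕ) (y : ℕ → Bool), n 0 = 0 ∧ StrictMono n ∧ A ⊆ MSet n y := by
  obtain ⟨F, hc, hnd, hmono, hsub⟩ := meagre_struct h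
  choose W hWne hW using fun (m k : ℕ) => exists_block (hc k) (hnd k) m
  set n : ℕ → ℕ := fun k => (bpr W k).length with hn
  have hn0 : n 0 = 0 := rfl
  have hnsucc : ∀ k, n (k+1) = n k + (W (n k) k).length := by
    intro k
    rw [hn]
    simp only [bpr_succ, List.length_append]
  have hsm : StrictMono n := by
    apply strictMono_nat_of_lt_succ
    intro k
    have := hWne (n k) k
    have hpos : 0 < (W (n k) k).length := List.length_pos_iff.mpr this
    rw [hnsucc k]
    omega
  have hnge : ∀ k, k ≤ n k := by
    intro k
    induction k with
    | zero => omega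
    | succ k ih =>
        have h2 : n k < n (k+1) := hsm (by omega)
        omega
  have hchain : ∀ k l, k ≤ l → bpr W k <+: bpr W l := by
    intro k l hkl
    induction l, hkl using Nat.le_induction with
    | base => exact List.prefix_refl _
    | succ l hl ih => exact ih.trans (by rw [bpr_succ]; exact List.prefix_append _ _)
  set y : ℕ → Bool := fun i => (bpr W (i+1)).getD i false with hy
  have hyval : ∀ k (i : ℕ) (h : i < n k), y i = (bpr W k)[i] := by
    intro k i hik
    have hi1 : i < n (i+1) := lt_of_lt_of_le (Nat.lt_succ_self i) (hnge (i+1))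
    have hgi : y i = (bpr W (i+1))[i] := List.getD_eq_getElem _ _ hi1
    rcases Nat.le_total (i+1) k with hle | hle
    · rw [hgi, (hchain (i+1) k hle).getElem hi1]
    · rw [hgi, (hchain k (i+1) hle).getElem hik]
  refine ⟨n, y, hn0, hsm, ?_⟩
  intro x hx
  obtain ⟨_, ⟨j, rfl⟩, hxj⟩ := hsub hx
  rw [MSet, Set.mem_setOf_eq, Filter.eventually_atTop]
  refine ⟨j, ?_⟩
  intro k hk hmatch
  -- x matches y on [n k, n (k+1)) : x is in the killed cylinder
  have hxcyl : x ∈ cyl (res x (n k) ++ W (n k) k) := by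
    apply mem_cyl_iff.mpr
    intro i hilen
    rw [List.length_append, res_length] at hilen
    rcases Nat.lt_or_ge i (n k) with hlt | hge
    · rw [List.getElem_append_left (by simpa using hlt), res_getElem]
    · have hiub : i < n (k+1) := by rw [hnsucc k]; omega
      have hiub' : i < (bpr W (k+1)).length := hiub
      have h1 : x i = y i := hmatch i hge hiub
      have h2 : y i = (bpr W (k+1))[i]'hiub' := hyval (k+1) i hiub
      have he : bpr W (k+1) = bpr W k ++ W (n k) k := bpr_succ W k
      have h3 : (bpr W (k+1))[i]'hiub'
          = (bpr W k ++ W (n k) k)[i]'(by rw [← he]; exact hiub') :=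
        List.getElem_of_eq he hiub'
      have h4 : (bpr W k ++ W (n k) k)[i]'(by rw [← he]; exact hiub')
          = (W (n k) k)[i - (bpr W k).length]'(by
            simp only [List.length_append] at *
            have : (bpr W k).length = n k := rfl
            omega) :=
        List.getElem_append_right (show (bpr W k).length ≤ i from hge)
      have h5 : (res x (n k) ++ W (n k) k)[i]'(by
            rw [List.length_append, res_length]; omega)
          = (W (n k) k)[i - (res x (n k)).length]'(by
            rw [res_length]; omega) :=
        List.getElem_append_right (by simpa using hge)
      simp only [res_length] at h5
      rw [h5, h1, h2, h3, h4]
  have := hW (n k) k (res x (n k)) (by simp)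
  have hxF : x ∉ F k := fun hxF =>
    Set.eq_empty_iff_forall_notMem.mp this x ⟨hxcyl, hxF⟩
  exact hxF (hmono hk hxj)

end Stmt14
namespace Stmt14

/-- iterated growth sequence -/
def growseq (F : ℕ → ℕ) : ℕ → ℕ := fun k => Nat.rec 0 (fun _ p => max (F p) (p+1)) k

@[simp] lemma growseq_zero (F) : growseq F 0 = 0 := rfl
lemma growseq_succ (F) (k : ℕ) : growseq F (k+1) = max (F (growseq F k)) (growseq F k + 1) := rfl

lemma growseq_strictMono (F) : StrictMono (growseq F) := by
  apply strictMono_nat_of_lt_succ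
  intro k
  rw [growseq_succ]
  omega

lemma growseq_ge (F) (k : ℕ) : k ≤ growseq F k := by
  induction k with
  | zero => omega
  | succ k ih => rw [growseq_succ]; omega

/-- MAIN combinatorial lemma (Miller-Truss), abstract form -/
lemma main_cantor {ι : Type*} (Bf : ι → Set (ℕ → Bool)) (hB : ∀ a, IsMeagre (Bf a))
    (Hb : ∀ e : ι → ℕ → ℕ, ∃ h : ℕ → ℕ, ∀ a, ∀ᶠ m in atTop, e a m < h m)
    (Hcov : ∀ E : ι → Set (ℕ → Bool), (∀ a, IsMeagre (E a)) → ∃ z, ∀ a, z ∉ E a) :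
    IsMeagre (⋃ a, Bf a) := by
  classical
  choose c y hc0 hcsm hcsub using fun a => exists_canonical (hB a)
  -- step 1 : common interval structure via Hb
  have hex : ∀ (a : ι) (m : ℕ), ∃ j, m ≤ c a j :=
    fun a m => ⟨m, (hcsm a).le_apply⟩
  set e1 : ι → ℕ → ℕ := fun a m => c a (Nat.find (hex a m) + 1) with he1
  obtain ⟨h₁, hh₁⟩ := Hb e1
  set n : ℕ → ℕ := growseq h₁ with hn
  have hnsm : StrictMono n := growseq_strictMono h₁
  have hnge : ∀ k, k ≤ n k := growseq_ge h₁
  have P1 : ∀ a, ∃ K, ∀ k, K ≤ k → ∃ j, n k ≤ c a j ∧ c a (j+1) ≤ n (k+1) := by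
    intro a
    obtain ⟨M, hM⟩ := Filter.eventually_atTop.mp (hh₁ a)
    refine ⟨M, fun k hk => ?_⟩
    have hnk : M ≤ n k := le_trans hk (hnge k)
    have h2 : e1 a (n k) < h₁ (n k) := hM (n k) hnk
    have h3 : h₁ (n k) ≤ n (k+1) := by
      rw [hn, growseq_succ]; omega
    have hre : e1 a (n k) = c a (Nat.find (hex a (n k)) + 1) := rfl
    exact ⟨Nat.find (hex a (n k)), Nat.find_spec (hex a (n k)), by omega⟩
  choose K₁ hK₁ using P1
  -- step 2 : generic z via Hcov
  set Pset : ι → ℕ → Set (ℕ → Bool) := fun a k =>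
    {z | ∃ j, n k ≤ c a j ∧ c a (j+1) ≤ n (k+1) ∧ MatchOn z (y a) (c a j) (c a (j+1))}
    with hPset
  have hPopen : ∀ a k, IsOpen (Pset a k) := by
    intro a k
    have : Pset a k = ⋃ j, ⋃ (_ : n k ≤ c a j ∧ c a (j+1) ≤ n (k+1)),
        {z | MatchOn z (y a) (c a j) (c a (j+1))} := by
      ext z
      simp only [hPset, Set.mem_setOf_eq, Set.mem_iUnion]
      constructor
      · rintro ⟨j, h1, h2, h3⟩; exact ⟨j, ⟨h1, h2⟩, h3⟩
      · rintro ⟨j, ⟨h1, h2⟩, h3⟩; exact ⟨j, h1, h2, h3⟩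
    rw [this]
    exact isOpen_iUnion fun j => isOpen_iUnion fun _ => isOpen_matchOn _ _ _
  have hEmeagre : ∀ a, IsMeagre {z : ℕ → Bool | ∀ᶠ k in atTop, z ∉ Pset a k} := by
    intro a
    apply meagre_of_blocks (hPopen a)
    intro N i
    refine ⟨max (max N i) (K₁ a), le_trans (le_max_left N i) (le_max_left _ _), ?_⟩
    intro x
    set k := max (max N i) (K₁ a) with hk
    obtain ⟨j, hj1, hj2⟩ := hK₁ a k (le_max_right _ _)
    refine ⟨ow x (y a) (c a j) (c a (j+1)), ⟨j, hj1, hj2, ?_⟩, ?_⟩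
    · intro i' h1 h2
      simp [ow, h1, h2]
    · intro i' hi'
      have hlt : i' < c a j := by
        have h4 : i ≤ k := le_trans (le_max_right N i) (le_max_left _ _)
        have h5 : k ≤ n k := hnge k
        omega
      simp [ow, Nat.not_le.mpr hlt]
  obtain ⟨z, hz⟩ := Hcov _ hEmeagre
  have hfreq : ∀ a m, ∃ k, m + 1 ≤ k ∧ z ∈ Pset a k := by
    intro a m
    have := hz a
    rw [Set.mem_setOf_eq, Filter.not_eventually] at this
    obtain ⟨k, hk1, hk2⟩ := Filter.frequently_atTop.mp this (m+1)
    simp only [Decidable.not_not] at hk2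
    exact ⟨k, hk1, hk2⟩
  -- step 3 : coarsening via Hb again
  set e2 : ι → ℕ → ℕ := fun a m => Nat.find (hfreq a m) with he2
  obtain ⟨h₂, hh₂⟩ := Hb e2
  set ms : ℕ → ℕ := growseq h₂ with hms
  have hmssm : StrictMono ms := growseq_strictMono h₂
  have hmsge : ∀ l, l ≤ ms l := growseq_ge h₂
  have P2 : ∀ a, ∃ L, ∀ l, L ≤ l → ∃ k, ms l ≤ k ∧ k + 1 ≤ ms (l+1) ∧ z ∈ Pset a k := by
    intro a
    obtain ⟨M, hM⟩ := Filter.eventually_atTop.mp (hh₂ a)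
    refine ⟨M, fun l hl => ?_⟩
    have hml : M ≤ ms l := le_trans hl (hmsge l)
    have h2 : e2 a (ms l) < h₂ (ms l) := hM (ms l) hml
    have h3 : h₂ (ms l) ≤ ms (l+1) := by rw [hms, growseq_succ]; omega
    obtain ⟨hk1, hk2⟩ := Nat.find_spec (hfreq a (ms l))
    have hre : e2 a (ms l) = Nat.find (hfreq a (ms l)) := rfl
    exact ⟨Nat.find (hfreq a (ms l)), by omega, by omega, hk2⟩
  choose K₂ hK₂ using P2
  -- conclusion
  have hfinal : (⋃ a, Bf a) ⊆ MSet (fun l => n (ms l)) z := by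
    intro x hx
    obtain ⟨_, ⟨a, rfl⟩, hxa⟩ := hx
    have hxM := hcsub a hxa
    rw [MSet, Set.mem_setOf_eq, Filter.eventually_atTop] at hxM
    obtain ⟨J, hJ⟩ := hxM
    rw [MSet, Set.mem_setOf_eq, Filter.eventually_atTop]
    refine ⟨max (K₂ a) (c a J + 1), ?_⟩
    intro l hl hmatch
    obtain ⟨k, hk1, hk2, hk3⟩ := hK₂ a l (le_trans (le_max_left _ _) hl)
    obtain ⟨j, hj1, hj2, hj3⟩ := hk3
    -- j is large
    have hjJ : J < j := by
      have h4 : l ≤ ms l := hmsge l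
      have h5 : ms l ≤ n (ms l) := hnge (ms l)
      have h6 : n (ms l) ≤ n k := hnsm.monotone hk1
      have h7 : c a J + 1 ≤ l := le_trans (le_max_right _ _) hl
      have h8 : c a J < c a j := by omega
      exact (hcsm a).lt_iff_lt.mp h8
    apply hJ j (by omega)
    -- x matches y a on the c-block j
    intro i hi1 hi2
    have hxz : x i = z i := by
      apply hmatch i
      · have h6 : n (ms l) ≤ n k := hnsm.monotone hk1
        omega
      · have h9 : n (k+1) ≤ n (ms (l+1)) := hnsm.monotone hk2
        omega
    rw [hxz]
    exact hj3 i hi1 hi2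
  exact IsMeagre.mono hfinal (meagre_MSet (hnsm.comp hmssm) z)

end Stmt14
namespace Stmt14

lemma not_meagre_univ : ¬ IsMeagre (Set.univ : Set (ℕ → ℕ)) := by
  intro h
  rw [IsMeagre, compl_univ] at h
  have := dense_of_mem_residual h
  simpa using this.nonempty

lemma meagre_singleton (x : ℕ → ℕ) : IsMeagre ({x} : Set (ℕ → ℕ)) := by
  apply meagre_of_struct (fun _ : ℕ => {x})
  · intro _
    rw [(isClosed_singleton).isNowhereDense_iff]
    apply Set.eq_empty_of_forall_notMem
    intro z hz
    obtain ⟨j, hj⟩ := exists_res_subset isOpen_interior hz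
    have hsub := hj.trans interior_subset
    have hzx : z = x := hsub (mem_cyl_res z j)
    set w : ℕ → ℕ := Function.update z j (z j + 1) with hw
    have hwc : w ∈ cyl (res z j) := by
      apply mem_cyl_iff.mpr
      intro i h
      rw [res_getElem]
      apply Function.update_of_ne
      simp at h
      omega
    have := hsub hwc
    rw [Set.mem_singleton_iff] at this
    have : w j = x j := by rw [this]
    rw [hw, Function.update_self, ← hzx] at this
    omega
  · intro z hz
    exact Set.mem_iUnion.mpr ⟨0, hz⟩

end Stmt14

open Cardinal

/-- add(M) = min{b, cov(M)} on Baire space. -/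
theorem stmt14 :
    sInf {c : Cardinal | ∃ 𝒜 : Set (Set (ℕ → ℕ)), #𝒜 = c ∧
        (∀ A ∈ 𝒜, IsMeagre A) ∧ ¬ IsMeagre (⋃₀ 𝒜)} =
      min
        (sInf {c : Cardinal | ∃ F : Set (ℕ → ℕ), #F = c ∧
          ∀ g : ℕ → ℕ, ∃ f ∈ F, ¬ ∀ᶠ k in atTop, f k < g k})
        (sInf {c : Cardinal | ∃ 𝒜 : Set (Set (ℕ → ℕ)), #𝒜 = c ∧
          (∀ A ∈ 𝒜, IsMeagre A) ∧ ⋃₀ 𝒜 = Set.univ}) := by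
  classical
  set SA := {c : Cardinal | ∃ 𝒜 : Set (Set (ℕ → ℕ)), #𝒜 = c ∧
      (∀ A ∈ 𝒜, IsMeagre A) ∧ ¬ IsMeagre (⋃₀ 𝒜)} with hSA
  set SB := {c : Cardinal | ∃ F : Set (ℕ → ℕ), #F = c ∧
      ∀ g : ℕ → ℕ, ∃ f ∈ F, ¬ ∀ᶠ k in atTop, f k < g k} with hSB
  set SC := {c : Cardinal | ∃ 𝒜 : Set (Set (ℕ → ℕ)), #𝒜 = c ∧
      (∀ A ∈ 𝒜, IsMeagre A) ∧ ⋃₀ 𝒜 = Set.univ} with hSC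
  have hCA : SC ⊆ SA := by
    rintro c ⟨𝒜, hc, hm, hu⟩
    refine ⟨𝒜, hc, hm, ?_⟩
    rw [hu]
    exact Stmt14.not_meagre_univ
  have hSCne : SC.Nonempty := by
    refine ⟨_, Set.range (fun x : ℕ → ℕ => ({x} : Set (ℕ → ℕ))), rfl, ?_, ?_⟩
    · rintro A ⟨x, rfl⟩
      exact Stmt14.meagre_singleton x
    · apply Set.eq_univ_of_forall
      intro x
      exact ⟨{x}, ⟨x, rfl⟩, rfl⟩
  have hSBne : SB.Nonempty := by
    refine ⟨_, (Set.univ : Set (ℕ → ℕ)), rfl, ?_⟩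
    intro g
    refine ⟨g, trivial, ?_⟩
    intro h
    obtain ⟨N, hN⟩ := Filter.eventually_atTop.mp h
    exact lt_irrefl _ (hN N le_rfl)
  have hSAne : SA.Nonempty := hSCne.mono hCA
  -- LHS ≤ RHS
  apply le_antisymm
  · apply le_min
    · -- sInf SA ≤ sInf SB
      apply le_csInf hSBne
      rintro c ⟨F, rfl, hFunb⟩
      have hmem : #((fun f => {g : ℕ → ℕ | ∀ᶠ k in Filter.atTop, g k ≤ Stmt14.hull f k}) '' F)
          ∈ SA := by
        refine ⟨_, rfl, ?_, Stmt14.unbounded_nonmeagre hFunb⟩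
        rintro A ⟨f, _, rfl⟩
        exact Stmt14.meagre_evBounded (Stmt14.hull f)
      exact le_trans (csInf_le' hmem) (Cardinal.mk_image_le)
    · exact csInf_le_csInf (OrderBot.bddBelow _) hSCne hCA
  · -- min ≤ sInf SA
    apply le_csInf hSAne
    rintro c ⟨𝒜, rfl, hmeag, hnm⟩
    by_contra hcon
    push_neg at hcon
    rw [lt_min_iff] at hcon
    obtain ⟨hltB, hltC⟩ := hcon
    apply hnm
    -- each member pushes into a meager set of Cantor space
    choose B hBm hBsub using fun a : ↥𝒜 => Stmt14.exists_meagre_image (hmeag a a.2)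
    -- Hb
    have Hb : ∀ e : ↥𝒜 → ℕ → ℕ, ∃ h : ℕ → ℕ, ∀ a, ∀ᶠ m in Filter.atTop, e a m < h m := by
      intro e
      by_contra hno
      simp only [not_exists, not_forall] at hno
      have hunb : ∀ g : ℕ → ℕ, ∃ f ∈ Set.range e, ¬ ∀ᶠ k in Filter.atTop, f k < g k := by
        intro g
        obtain ⟨a, ha⟩ := hno g
        exact ⟨e a, ⟨a, rfl⟩, ha⟩
      have : sInf SB ≤ #(Set.range e) := csInf_le' ⟨Set.range e, rfl, hunb⟩
      have h2 : #(Set.range e) ≤ #↥𝒜 := Cardinal.mk_range_le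
      exact absurd (lt_of_le_of_lt (this.trans h2) hltB) (lt_irrefl _)
    -- Hcov
    have Hcov : ∀ E : ↥𝒜 → Set (ℕ → Bool), (∀ a, IsMeagre (E a)) →
        ∃ z, ∀ a, z ∉ E a := by
      intro E hE
      by_contra hno
      push_neg at hno
      have hcover : ⋃₀ (Set.range (fun a : ↥𝒜 => Stmt14.phi ⁻¹' E a)) = Set.univ := by
        apply Set.eq_univ_of_forall
        intro g
        obtain ⟨a, ha⟩ := hno (Stmt14.phi g)
        exact ⟨Stmt14.phi ⁻¹' E a, ⟨a, rfl⟩, ha⟩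
      have hmem : #(Set.range (fun a : ↥𝒜 => Stmt14.phi ⁻¹' E a)) ∈ SC := by
        refine ⟨_, rfl, ?_, hcover⟩
        rintro A ⟨a, rfl⟩
        exact Stmt14.meagre_preimage_phi (hE a)
      have : sInf SC ≤ #(Set.range (fun a : ↥𝒜 => Stmt14.phi ⁻¹' E a)) := csInf_le' hmem
      have h2 : #(Set.range (fun a : ↥𝒜 => Stmt14.phi ⁻¹' E a)) ≤ #↥𝒜 :=
        Cardinal.mk_range_le
      exact absurd (lt_of_le_of_lt (this.trans h2) hltC) (lt_irrefl _)
    have hUB : IsMeagre (⋃ a : ↥𝒜, B a) := Stmt14.main_cantor B hBm Hb Hcov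
    have hpre : IsMeagre (Stmt14.phi ⁻¹' (⋃ a : ↥𝒜, B a)) :=
      Stmt14.meagre_preimage_phi hUB
    refine IsMeagre.mono ?_ hpre
    intro x hx
    obtain ⟨A, hA𝒜, hxA⟩ := hx
    exact Set.mem_preimage.mpr (Set.mem_iUnion.mpr ⟨⟨A, hA𝒜⟩, hBsub ⟨A, hA𝒜⟩ x hxA⟩)
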